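/- Let {v_m, a_{m,n}} satisfy the Gauss–Lusztig q-commutation relations for GL_q(N). Define the change of variables a'_{m,1} = a_{m,1} and a'_{m,n} = q·a_{m,n}·a_{m,n−1}⁻¹ for n > 1 (assuming the a_{m,n} are invertible). Then for each m and 1 < n ≤ m: a'_{m,n} a'_{m,n−1} = q² a'_{m,n−1} a'_{m,n}, a'_{m−1,n−1} a'_{m,n} = q² a'_{m,n} a'_{m−1,n−1}, and a'_{m,n} a'_{m−1,n} = q² a'_{m−1,n} a'_{m,n}, while a'_{m,n} commutes with a'_{m',n'} whenever |m−m'| ≥ 2 or (|m−m'| ≤ 1 and |n−n'| ≥ 2). -/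

import Mathlib

section QC
variable {K R : Type*} [Field K] [Ring R] [Algebra K R]

/-- `x y = c • (y x)` -/
def qc (c : K) (x y : R) : Prop := x * y = c • (y * x)

lemma qc_of_commute {x y : R} (h : Commute x y) : qc (1 : K) x y := by
  simp [qc, h.eq]

lemma qc.commute {x y : R} (h : qc (1 : K) x y) : Commute x y := by
  simpa [qc, commute_iff_eq] using h

lemma qc.of_eq {c c' : K} {x y : R} (h : qc c x y) (e : c' = c) : qc c' x y := e ▸ h

lemma qc.reduce {c c' : K} {x y : R} (h : qc c x y) (e : c' = c) :
    x * y = c' • (y * x) := h.of_eq e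

lemma qc_mk {c : K} {x y : R} (h : x * y = c • (y * x)) : qc c x y := h

lemma qc.commute_of {c : K} {x y : R} (h : qc c x y) (e : (1 : K) = c) : Commute x y :=
  (h.of_eq e).commute

lemma qc.symm {c : K} {x y : R} (h : qc c x y) (hc : c ≠ 0) : qc c⁻¹ y x := by
  unfold qc at h ⊢
  rw [h, smul_smul, inv_mul_cancel₀ hc, one_smul]

lemma qc.mul_left {c c' : K} {x x' y : R} (h : qc c x y) (h' : qc c' x' y) :
    qc (c * c') (x * x') y := by
  unfold qc at *
  calc x * x' * y = x * (x' * y) := by rw [mul_assoc]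
    _ = x * (c' • (y * x')) := by rw [h']
    _ = c' • (x * y * x') := by rw [mul_smul_comm, mul_assoc]
    _ = c' • ((c • (y * x)) * x') := by rw [h]
    _ = c' • (c • (y * (x * x'))) := by rw [smul_mul_assoc, mul_assoc]
    _ = (c * c') • (y * (x * x')) := by rw [smul_smul, mul_comm c' c]

lemma qc.mul_right {c c' : K} {x y y' : R} (h : qc c x y) (h' : qc c' x y') :
    qc (c * c') x (y * y') := by
  unfold qc at *
  calc x * (y * y') = (x * y) * y' := by rw [mul_assoc]
    _ = (c • (y * x)) * y' := by rw [h]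
    _ = c • (y * (x * y')) := by rw [smul_mul_assoc, mul_assoc]
    _ = c • (y * (c' • (y' * x))) := by rw [h']
    _ = c • (c' • (y * y' * x)) := by rw [mul_smul_comm, mul_assoc]
    _ = (c * c') • (y * y' * x) := by rw [smul_smul]

lemma qc.inv_left {c : K} {x y xi : R} (h : qc c x y) (h1 : x * xi = 1) (h2 : xi * x = 1) :
    qc c y xi := by
  unfold qc at h ⊢
  calc y * xi = (xi * x) * (y * xi) := by rw [h2, one_mul]
    _ = xi * ((x * y) * xi) := by simp only [mul_assoc]
    _ = xi * ((c • (y * x)) * xi) := by rw [h]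
    _ = c • (xi * y * (x * xi)) := by simp only [smul_mul_assoc, mul_smul_comm, mul_assoc]
    _ = c • (xi * y) := by rw [h1, mul_one]

lemma qc.inv_right {c : K} {x y yi : R} (h : qc c x y) (h1 : y * yi = 1) (h2 : yi * y = 1) :
    qc c yi x := by
  unfold qc at h ⊢
  calc yi * x = yi * x * (y * yi) := by rw [h1, mul_one]
    _ = yi * ((x * y) * yi) := by simp only [mul_assoc]
    _ = yi * ((c • (y * x)) * yi) := by rw [h]
    _ = c • (yi * y * (x * yi)) := by simp only [smul_mul_assoc, mul_smul_comm, mul_assoc]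
    _ = c • (x * yi) := by rw [h2, one_mul]

lemma qc.smul_left {c : K} {x y : R} (h : qc c x y) (d : K) : qc c (d • x) y := by
  unfold qc at h ⊢
  rw [smul_mul_assoc, h, mul_smul_comm, smul_comm]

lemma qc.smul_right {c : K} {x y : R} (h : qc c x y) (d : K) : qc c x (d • y) := by
  unfold qc at h ⊢
  rw [mul_smul_comm, h, smul_mul_assoc, smul_comm]

lemma qc4 {c11 c12 c21 c22 : K} {x1 x2 y1 y2 : R}
    (h11 : qc c11 x1 y1) (h12 : qc c12 x1 y2) (h21 : qc c21 x2 y1) (h22 : qc c22 x2 y2) :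
    qc (c11 * c12 * (c21 * c22)) (x1 * x2) (y1 * y2) :=
  (h11.mul_right h12).mul_left (h21.mul_right h22)

lemma Commute.invLift {x y yi : R} (h : Commute x y) (h1 : y * yi = 1) (h2 : yi * y = 1) :
    Commute x yi := by
  show x * yi = yi * x
  calc x * yi = yi * (y * x * yi) := by rw [← mul_assoc, ← mul_assoc, h2, one_mul]
    _ = yi * (x * y * yi) := by rw [h.eq]
    _ = yi * x * (y * yi) := by simp only [mul_assoc]
    _ = yi * x := by rw [h1, mul_one]

lemma commute_of_inv {x xi : R} (h1 : x * xi = 1) (h2 : xi * x = 1) : Commute xi x := by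
  show xi * x = x * xi
  rw [h1, h2]

lemma commute_smul_left {x y : R} (h : Commute x y) (r : K) : Commute (r • x) y := by
  show r • x * y = y * (r • x)
  rw [smul_mul_assoc, mul_smul_comm, h.eq]

lemma commute_smul_right {x y : R} (h : Commute x y) (r : K) : Commute x (r • y) := by
  show x * (r • y) = r • y * x
  rw [mul_smul_comm, smul_mul_assoc, h.eq]

end QC

/-- The cluster-𝒳-type change of variables `a'_{m,1} = a_{m,1}`,
`a'_{m,n} = q·a_{m,n}·a_{m,n−1}⁻¹` for `n > 1`, applied to the Gauss–Lusztig
generators, yields the symmetric q-commutation relations. -/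
theorem stmt14 {K R : Type*} [Field K] [Ring R] [Algebra K R]
    (q : K) (hq : q ≠ 0) (N : ℕ)
    (a ainv : ℕ → ℕ → R) (v : ℕ → R)
    -- invertibility of the a's
    (hinv : ∀ m n, 1 ≤ n → n ≤ m → m ≤ N - 1 →
      a m n * ainv m n = 1 ∧ ainv m n * a m n = 1)
    -- Gauss–Lusztig q-commutation relations
    (hav : ∀ m n, 1 ≤ n → n ≤ m → m ≤ N - 1 →
      a m n * v m = q ^ 2 • (v m * a m n))
    (haa : ∀ m n n', 1 ≤ n' → n' < n → n ≤ m → m ≤ N - 1 →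
      a m n * a m n' = q ^ 2 • (a m n' * a m n))
    (hadj : ∀ m n n', 1 ≤ n → n ≤ n' → n ≤ m → m ≤ N - 1 → n' ≤ m - 1 →
      a m n * a (m - 1) n' = q ^ 2 • (a (m - 1) n' * a m n))
    (hcom1 : ∀ m n m' n', m' + 2 ≤ m → Commute (a m n) (a m' n'))
    (hcom2 : ∀ m n n', n' < n → Commute (a m n) (a (m - 1) n'))
    (hcom3 : ∀ m n m', m' ≠ m → Commute (a m n) (v m'))
    (hcom4 : ∀ m m', Commute (v m) (v m')) :
    let a' : ℕ → ℕ → R := fun m n =>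
      if n = 1 then a m 1 else q • (a m n * ainv m (n - 1))
    (∀ m n, 1 < n → n ≤ m → m ≤ N - 1 →
      a' m n * a' m (n - 1) = q ^ 2 • (a' m (n - 1) * a' m n)) ∧
    (∀ m n, 1 < n → n ≤ m → m ≤ N - 1 →
      a' (m - 1) (n - 1) * a' m n = q ^ 2 • (a' m n * a' (m - 1) (n - 1))) ∧
    (∀ m n, 1 < n → n ≤ m - 1 → m ≤ N - 1 →
      a' m n * a' (m - 1) n = q ^ 2 • (a' (m - 1) n * a' m n)) ∧
    (∀ m n m' n', 1 ≤ n → n ≤ m → m ≤ N - 1 → 1 ≤ n' → n' ≤ m' → m' ≤ N - 1 →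
      (m' + 2 ≤ m ∨ m + 2 ≤ m' ∨
        ((m - m' ≤ 1 ∧ m' - m ≤ 1) ∧ (n' + 2 ≤ n ∨ n + 2 ≤ n'))) →
      Commute (a' m n) (a' m' n')) := by
  intro a'
  have hq2 : q ^ 2 ≠ 0 := pow_ne_zero 2 hq
  refine ⟨?_, ?_, ?_, ?_⟩
  · -- relation 1 : a' m n with a' m (n-1)
    intro m n hn hnm hmN
    simp only [a']
    by_cases hn2 : n = 2
    · subst hn2
      rw [show (2:ℕ) - 1 = 1 from rfl, if_neg (by norm_num : ¬ (2:ℕ) = 1), if_pos rfl]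
      have i1 := hinv m 1 le_rfl (by omega) hmN
      have q1 : qc (q ^ 2) (a m 2) (a m 1) := haa m 2 1 le_rfl one_lt_two hnm hmN
      have q2 : qc (1 : K) (ainv m 1) (a m 1) := qc_of_commute (commute_of_inv i1.1 i1.2)
      exact ((q1.mul_left q2).smul_left q).reduce (by ring)
    · rw [if_neg (by omega : ¬ n = 1), if_neg (by omega : ¬ n - 1 = 1),
        (by omega : n - 1 - 1 = n - 2)]
      have i1 := hinv m (n - 1) (by omega) (by omega) hmN
      have i2 := hinv m (n - 2) (by omega) (by omega) hmN
      have h11 : qc (q ^ 2) (a m n) (a m (n - 1)) :=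
        haa m n (n - 1) (by omega) (by omega) hnm hmN
      have h12 : qc ((q ^ 2)⁻¹) (a m n) (ainv m (n - 2)) :=
        ((qc_mk (haa m n (n - 2) (by omega) (by omega) hnm hmN)).inv_right i2.1 i2.2).symm hq2
      have h21 : qc (1 : K) (ainv m (n - 1)) (a m (n - 1)) :=
        qc_of_commute (commute_of_inv i1.1 i1.2)
      have h22 : qc (q ^ 2) (ainv m (n - 1)) (ainv m (n - 2)) :=
        ((qc_mk (haa m (n - 1) (n - 2) (by omega) (by omega) (by omega) hmN)).inv_left
          i1.1 i1.2).inv_left i2.1 i2.2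
      exact ((qc4 h11 h12 h21 h22).smul_left q |>.smul_right q).reduce (by field_simp)
  · -- relation 2 : a' (m-1) (n-1) with a' m n
    intro m n hn hnm hmN
    simp only [a']
    by_cases hn2 : n = 2
    · subst hn2
      rw [show (2:ℕ) - 1 = 1 from rfl, if_pos rfl, if_neg (by norm_num : ¬ (2:ℕ) = 1)]
      have i1 := hinv m 1 le_rfl (by omega) hmN
      have h1 : qc (1 : K) (a (m - 1) 1) (a m 2) :=
        qc_of_commute (hcom2 m 2 1 one_lt_two).symm
      have h2 : qc (q ^ 2) (a (m - 1) 1) (ainv m 1) :=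
        (qc_mk (hadj m 1 1 le_rfl le_rfl (by omega) hmN (by omega))).inv_left i1.1 i1.2
      exact ((h1.mul_right h2).smul_right q).reduce (by ring)
    · rw [if_neg (by omega : ¬ n = 1), if_neg (by omega : ¬ n - 1 = 1),
        (by omega : n - 1 - 1 = n - 2)]
      have i1 := hinv m (n - 1) (by omega) (by omega) hmN
      have i2 := hinv (m - 1) (n - 2) (by omega) (by omega) (by omega)
      have h11 : qc (1 : K) (a (m - 1) (n - 1)) (a m n) :=
        qc_of_commute (hcom2 m n (n - 1) (by omega)).symm
      have h12 : qc (q ^ 2) (a (m - 1) (n - 1)) (ainv m (n - 1)) :=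
        (qc_mk (hadj m (n - 1) (n - 1) (by omega) le_rfl (by omega) hmN (by omega))).inv_left i1.1 i1.2
      have h21 : qc (1 : K) (ainv (m - 1) (n - 2)) (a m n) :=
        qc_of_commute (((hcom2 m n (n - 2) (by omega)).invLift i2.1 i2.2).symm)
      have h22 : qc (1 : K) (ainv (m - 1) (n - 2)) (ainv m (n - 1)) :=
        qc_of_commute
          ((((hcom2 m (n - 1) (n - 2) (by omega)).invLift i2.1 i2.2).symm).invLift i1.1 i1.2)
      exact ((qc4 h11 h12 h21 h22).smul_left q |>.smul_right q).reduce (by ring)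
  · -- relation 3 : a' m n with a' (m-1) n
    intro m n hn hnm1 hmN
    simp only [a']
    rw [if_neg (by omega : ¬ n = 1), if_neg (by omega : ¬ n = 1)]
    have i1 := hinv m (n - 1) (by omega) (by omega) hmN
    have i2 := hinv (m - 1) (n - 1) (by omega) (by omega) (by omega)
    have h11 : qc (q ^ 2) (a m n) (a (m - 1) n) :=
      hadj m n n (by omega) le_rfl (by omega) hmN hnm1
    have h12 : qc (1 : K) (a m n) (ainv (m - 1) (n - 1)) :=
      qc_of_commute ((hcom2 m n (n - 1) (by omega)).invLift i2.1 i2.2)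
    have h21 : qc ((q ^ 2)⁻¹) (ainv m (n - 1)) (a (m - 1) n) :=
      ((qc_mk (hadj m (n - 1) n (by omega) (by omega) (by omega) hmN hnm1)).inv_left i1.1 i1.2).symm hq2
    have h22 : qc (q ^ 2) (ainv m (n - 1)) (ainv (m - 1) (n - 1)) :=
      ((qc_mk (hadj m (n - 1) (n - 1) (by omega) le_rfl (by omega) hmN (by omega))).inv_left
        i1.1 i1.2).inv_left i2.1 i2.2
    exact ((qc4 h11 h12 h21 h22).smul_left q |>.smul_right q).reduce (by field_simp)
  · -- relation 4 : commutation
    have key : ∀ m n m' n', 1 ≤ n → n ≤ m → m ≤ N - 1 → 1 ≤ n' → n' ≤ m' → m' ≤ N - 1 →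
        (m' + 2 ≤ m ∨ ((m - m' ≤ 1 ∧ m' - m ≤ 1) ∧ n' + 2 ≤ n)) →
        Commute (a' m n) (a' m' n') := by
      intro m n m' n' h1 h2 h3 h1' h2' h3' hc
      simp only [a']
      rcases hc with hfar | ⟨⟨hd1, hd2⟩, hnn⟩
      · -- far apart rows: everything commutes
        have base : ∀ k k', Commute (a m k) (a m' k') := fun k k' => hcom1 m k m' k' hfar
        split_ifs with e e' e'
        · exact base 1 1
        · have j := hinv m' (n' - 1) (by omega) (by omega) h3'
          exact commute_smul_right
            ((base 1 n').mul_right ((base 1 (n' - 1)).invLift j.1 j.2)) q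
        · have i := hinv m (n - 1) (by omega) (by omega) h3
          exact commute_smul_left
            ((base n 1).mul_left (((base (n - 1) 1).symm.invLift i.1 i.2).symm)) q
        · have i := hinv m (n - 1) (by omega) (by omega) h3
          have j := hinv m' (n' - 1) (by omega) (by omega) h3'
          have c11 := base n n'
          have c12 := (base n (n' - 1)).invLift j.1 j.2
          have c21 := ((base (n - 1) n').symm.invLift i.1 i.2).symm
          have c22 := (((base (n - 1) (n' - 1)).symm.invLift i.1 i.2).symm).invLift j.1 j.2
          exact commute_smul_left
            (commute_smul_right ((c11.mul_right c12).mul_left (c21.mul_right c22)) q) q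
      · -- neighbouring rows, columns at distance ≥ 2 (n ≥ n' + 2)
        rw [if_neg (by omega : ¬ n = 1)]
        rcases (by omega : m = m' ∨ m = m' + 1 ∨ m' = m + 1) with e | e | e
        · -- same row
          subst e
          have i := hinv m (n - 1) (by omega) (by omega) h3
          by_cases e' : n' = 1
          · subst e'
            rw [if_pos rfl]
            have h1a : qc (q ^ 2) (a m n) (a m 1) := haa m n 1 le_rfl (by omega) h2 h3
            have h2a : qc ((q ^ 2)⁻¹) (ainv m (n - 1)) (a m 1) :=
              ((qc_mk (haa m (n - 1) 1 le_rfl (by omega) (by omega) h3)).inv_left i.1 i.2).symm hq2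
            exact (((h1a.mul_left h2a).smul_left q).commute_of (by field_simp))
          · rw [if_neg e']
            have j := hinv m (n' - 1) (by omega) (by omega) h3
            have h11 : qc (q ^ 2) (a m n) (a m n') := haa m n n' h1' (by omega) h2 h3
            have h12 : qc ((q ^ 2)⁻¹) (a m n) (ainv m (n' - 1)) :=
              ((qc_mk (haa m n (n' - 1) (by omega) (by omega) h2 h3)).inv_right j.1 j.2).symm hq2
            have h21 : qc ((q ^ 2)⁻¹) (ainv m (n - 1)) (a m n') :=
              ((qc_mk (haa m (n - 1) n' h1' (by omega) (by omega) h3)).inv_left i.1 i.2).symm hq2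
            have h22 : qc (q ^ 2) (ainv m (n - 1)) (ainv m (n' - 1)) :=
              ((qc_mk (haa m (n - 1) (n' - 1) (by omega) (by omega) (by omega) h3)).inv_left
                i.1 i.2).inv_left j.1 j.2
            exact (((qc4 h11 h12 h21 h22).smul_left q |>.smul_right q).commute_of
              (by field_simp))
        · -- m = m' + 1 : a' m n on the higher row
          subst e
          have P3 : ∀ k k', k' < k → Commute (a (m' + 1) k) (a m' k') := fun k k' hk => by
            simpa using hcom2 (m' + 1) k k' hk
          have i := hinv (m' + 1) (n - 1) (by omega) (by omega) h3
          by_cases e' : n' = 1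
          · subst e'
            rw [if_pos rfl]
            have c1 : Commute (a (m' + 1) n) (a m' 1) := P3 n 1 (by omega)
            have c2 : Commute (ainv (m' + 1) (n - 1)) (a m' 1) :=
              ((P3 (n - 1) 1 (by omega)).symm.invLift i.1 i.2).symm
            exact commute_smul_left (c1.mul_left c2) q
          · rw [if_neg e']
            have j := hinv m' (n' - 1) (by omega) (by omega) h3'
            have c11 : Commute (a (m' + 1) n) (a m' n') := P3 n n' (by omega)
            have c12 : Commute (a (m' + 1) n) (ainv m' (n' - 1)) :=
              (P3 n (n' - 1) (by omega)).invLift j.1 j.2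
            have c21 : Commute (ainv (m' + 1) (n - 1)) (a m' n') :=
              ((P3 (n - 1) n' (by omega)).symm.invLift i.1 i.2).symm
            have c22 : Commute (ainv (m' + 1) (n - 1)) (ainv m' (n' - 1)) :=
              (((P3 (n - 1) (n' - 1) (by omega)).symm.invLift i.1 i.2).symm).invLift j.1 j.2
            exact commute_smul_left
              (commute_smul_right ((c11.mul_right c12).mul_left (c21.mul_right c22)) q) q
        · -- m' = m + 1 : a' m' n' on the higher row
          subst e
          have P2' : ∀ k k', 1 ≤ k' → k' ≤ k → k ≤ m → qc (q ^ 2) (a (m + 1) k') (a m k) := by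
            intro k k' ha hb hc
            show a (m + 1) k' * a m k = q ^ 2 • (a m k * a (m + 1) k')
            simpa using hadj (m + 1) k' k ha hb (by omega) h3' (by omega)
          have i := hinv m (n - 1) (by omega) (by omega) h3
          by_cases e' : n' = 1
          · subst e'
            rw [if_pos rfl]
            have h1a : qc ((q ^ 2)⁻¹) (a m n) (a (m + 1) 1) :=
              (P2' n 1 le_rfl (by omega) h2).symm hq2
            have h2a : qc (q ^ 2) (ainv m (n - 1)) (a (m + 1) 1) :=
              (P2' (n - 1) 1 le_rfl (by omega) (by omega)).inv_right i.1 i.2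
            exact (((h1a.mul_left h2a).smul_left q).commute_of (by field_simp))
          · rw [if_neg e']
            have j := hinv (m + 1) (n' - 1) (by omega) (by omega) h3'
            have h11 : qc ((q ^ 2)⁻¹) (a m n) (a (m + 1) n') :=
              (P2' n n' h1' (by omega) h2).symm hq2
            have h12 : qc (q ^ 2) (a m n) (ainv (m + 1) (n' - 1)) :=
              (P2' n (n' - 1) (by omega) (by omega) h2).inv_left j.1 j.2
            have h21 : qc (q ^ 2) (ainv m (n - 1)) (a (m + 1) n') :=
              (P2' (n - 1) n' h1' (by omega) (by omega)).inv_right i.1 i.2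
            have h22 : qc ((q ^ 2)⁻¹) (ainv m (n - 1)) (ainv (m + 1) (n' - 1)) :=
              (((P2' (n - 1) (n' - 1) (by omega) (by omega) (by omega)).inv_right
                i.1 i.2).inv_right j.1 j.2).symm hq2
            exact (((qc4 h11 h12 h21 h22).smul_left q |>.smul_right q).commute_of
              (by field_simp))
    intro m n m' n' h1 h2 h3 h1' h2' h3' hc
    rcases hc with hf | hf | ⟨hnear, hside⟩
    · exact key m n m' n' h1 h2 h3 h1' h2' h3' (Or.inl hf)
    · exact (key m' n' m n h1' h2' h3' h1 h2 h3 (Or.inl hf)).symm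
    · rcases hside with hs | hs
      · exact key m n m' n' h1 h2 h3 h1' h2' h3' (Or.inr ⟨⟨hnear.1, hnear.2⟩, hs⟩)
      · exact (key m' n' m n h1' h2' h3' h1 h2 h3
          (Or.inr ⟨⟨by omega, by omega⟩, hs⟩)).symm
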